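/- Let M₁, ..., M_q ∈ SL(n, ℂ) with n ≥ 2, and define L(X) = (X M₁ − (M₁*)⁻¹ X, ..., X M_q − (M_q*)⁻¹ X). Suppose for some indices i, j the pair {M_i, M_j} is irreducible, and suppose there exists C ∈ SL(n, ℂ) such that C M_k C⁻¹ is unitary for all k. Then the kernel of L has complex dimension exactly 1; more precisely, ker L = ℂ·(C*C). -/
import Mathlib


open Matrix
open scoped ComplexOrder

/-- If M_i, M_j form an irreducible pair and the M_k are simultaneously
unitarizable by C ∈ SL(n,ℂ), then the kernel of L is exactly ℂ·(CᴴC). -/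
theorem ker_L_one_dimensional {n q : ℕ} (hn : 2 ≤ n)
    (M : Fin q → Matrix (Fin n) (Fin n) ℂ) (hM : ∀ k, (M k).det = 1)
    (i j : Fin q)
    (hirr : ¬ ∃ V : Submodule ℂ (Fin n → ℂ), V ≠ ⊥ ∧ V ≠ ⊤ ∧
      (∀ v ∈ V, (M i).mulVec v ∈ V) ∧ (∀ v ∈ V, (M j).mulVec v ∈ V))
    (C : Matrix (Fin n) (Fin n) ℂ) (hC : C.det = 1)
    (hCuni : ∀ k, (C * M k * C⁻¹) ∈ Matrix.unitaryGroup (Fin n) ℂ) :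
    ∀ X : Matrix (Fin n) (Fin n) ℂ,
      (∀ k, X * M k - ((M k)ᴴ)⁻¹ * X = 0) ↔ ∃ c : ℂ, X = c • (Cᴴ * C) := by
  have hCdet : IsUnit C.det := by rw [hC]; exact isUnit_one
  have hMdet : ∀ k, IsUnit (M k).det := fun k => by rw [hM k]; exact isUnit_one
  have hMHdet : ∀ k, IsUnit ((M k)ᴴ).det := fun k => by
    rw [det_conjTranspose, hM k]; simp
  have hc1 : Cᴴ * (C⁻¹)ᴴ = 1 := by
    rw [← conjTranspose_mul, Matrix.nonsing_inv_mul C hCdet, conjTranspose_one]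
  have hc2 : C⁻¹ * C = 1 := Matrix.nonsing_inv_mul C hCdet
  -- key : (M k)ᴴ * (Cᴴ * C) * M k = Cᴴ * C
  have key : ∀ k, (M k)ᴴ * (Cᴴ * C) * M k = Cᴴ * C := by
    intro k
    have h := (mem_unitaryGroup_iff'.mp (hCuni k))
    rw [star_eq_conjTranspose] at h
    simp only [conjTranspose_mul] at h
    have h' : (C⁻¹)ᴴ * ((M k)ᴴ * (Cᴴ * C) * M k) * C⁻¹ = 1 := by
      simp only [Matrix.mul_assoc] at h ⊢
      exact h
    calc (M k)ᴴ * (Cᴴ * C) * M k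
        = (Cᴴ * (C⁻¹)ᴴ) * ((M k)ᴴ * (Cᴴ * C) * M k) * (C⁻¹ * C) := by
          rw [hc1, hc2, Matrix.one_mul, Matrix.mul_one]
      _ = Cᴴ * ((C⁻¹)ᴴ * ((M k)ᴴ * (Cᴴ * C) * M k) * C⁻¹) * C := by
          simp only [Matrix.mul_assoc]
      _ = Cᴴ * C := by rw [h', Matrix.mul_one]
  have hCCdet : IsUnit (Cᴴ * C).det := by
    rw [det_mul, det_conjTranspose, hC]; simp
  intro X
  constructor
  · intro hX
    have hX' : ∀ k, X * M k = ((M k)ᴴ)⁻¹ * X := fun k => sub_eq_zero.mp (hX k)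
    set W : Matrix (Fin n) (Fin n) ℂ := (Cᴴ * C)⁻¹ * X with hW
    have hcomm : ∀ k, W * M k = M k * W := by
      intro k
      have h1 : (M k)ᴴ * (Cᴴ * C) = (Cᴴ * C) * (M k)⁻¹ := by
        calc (M k)ᴴ * (Cᴴ * C)
            = ((M k)ᴴ * (Cᴴ * C) * M k) * (M k)⁻¹ := by
              rw [Matrix.mul_assoc ((M k)ᴴ * (Cᴴ * C)),
                Matrix.mul_nonsing_inv (M k) (hMdet k), Matrix.mul_one]
          _ = (Cᴴ * C) * (M k)⁻¹ := by rw [key k]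
      have h2 : (Cᴴ * C)⁻¹ * ((M k)ᴴ)⁻¹ = M k * (Cᴴ * C)⁻¹ := by
        rw [← Matrix.mul_inv_rev, h1, Matrix.mul_inv_rev,
          Matrix.nonsing_inv_nonsing_inv (M k) (hMdet k)]
      calc W * M k = (Cᴴ * C)⁻¹ * (X * M k) := by rw [hW, Matrix.mul_assoc]
        _ = (Cᴴ * C)⁻¹ * (((M k)ᴴ)⁻¹ * X) := by rw [hX' k]
        _ = ((Cᴴ * C)⁻¹ * ((M k)ᴴ)⁻¹) * X := by rw [Matrix.mul_assoc]
        _ = M k * W := by rw [h2, hW, Matrix.mul_assoc]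
    have hne : Nonempty (Fin n) := ⟨⟨0, by omega⟩⟩
    have : Nontrivial (Fin n → ℂ) := by infer_instance
    obtain ⟨c, hc⟩ := Module.End.exists_eigenvalue W.mulVecLin
    set V := Module.End.eigenspace W.mulVecLin c with hVdef
    have hVne : V ≠ ⊥ := hc
    have hinv : ∀ k, ∀ v ∈ V, (M k).mulVec v ∈ V := by
      intro k v hv
      rw [hVdef, Module.End.mem_eigenspace_iff] at hv ⊢
      rw [Matrix.mulVecLin_apply] at hv ⊢
      calc W *ᵥ (M k *ᵥ v) = (W * M k) *ᵥ v := Matrix.mulVec_mulVec v W (M k)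
        _ = (M k * W) *ᵥ v := by rw [hcomm k]
        _ = M k *ᵥ (W *ᵥ v) := (Matrix.mulVec_mulVec v (M k) W).symm
        _ = M k *ᵥ (c • v) := by rw [hv]
        _ = c • (M k *ᵥ v) := Matrix.mulVec_smul (M k) c v
    have hVtop : V = ⊤ := by
      by_contra hne'
      exact hirr ⟨V, hVne, hne', hinv i, hinv j⟩
    have hWsmul : W = c • (1 : Matrix (Fin n) (Fin n) ℂ) := by
      ext a b
      have hb : (Pi.single b 1 : Fin n → ℂ) ∈ V := hVtop ▸ Submodule.mem_top
      rw [hVdef, Module.End.mem_eigenspace_iff] at hb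
      have := congrFun hb a
      simpa [Matrix.mulVecLin_apply, Matrix.mulVec_single, Matrix.one_apply,
        Pi.single_apply, mul_comm] using this
    refine ⟨c, ?_⟩
    have hXW : X = (Cᴴ * C) * W := by
      rw [hW, ← Matrix.mul_assoc, Matrix.mul_nonsing_inv _ hCCdet, Matrix.one_mul]
    rw [hXW, hWsmul, Matrix.mul_smul, Matrix.mul_one]
  · rintro ⟨c, rfl⟩ k
    have h1 : (Cᴴ * C) * M k = ((M k)ᴴ)⁻¹ * (Cᴴ * C) := by
      calc (Cᴴ * C) * M k
          = ((M k)ᴴ)⁻¹ * ((M k)ᴴ * (Cᴴ * C) * M k) := by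
            rw [← Matrix.mul_assoc, ← Matrix.mul_assoc,
              Matrix.nonsing_inv_mul _ (hMHdet k), Matrix.one_mul]
        _ = ((M k)ᴴ)⁻¹ * (Cᴴ * C) := by rw [key k]
    rw [Matrix.smul_mul, Matrix.mul_smul, h1, sub_self]
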